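/- In any group G satisfying [G'', G, G] = 1, for all u, v in the derived subgroup G', we have [u⁻¹, v] = [u, v]⁻¹. -/

import Mathlib

open scoped commutatorElement

theorem stmt1 {G : Type*} [Group G]
    (h : ⁅⁅derivedSeries G 2, (⊤ : Subgroup G)⁆, (⊤ : Subgroup G)⁆ = (⊥ : Subgroup G))
    (u v : G) (hu : u ∈ derivedSeries G 1) (hv : v ∈ derivedSeries G 1) :
    ⁅u⁻¹, v⁆ = ⁅u, v⁆⁻¹ := by
  -- centrality of ⁅c, x⁆ for c in the second derived subgroup
  have hcent : ∀ c ∈ derivedSeries G 2, ∀ x g : G, Commute ⁅c, x⁆ g := by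
    intro c hc x g
    have h1 : ⁅c, x⁆ ∈ ⁅derivedSeries G 2, (⊤ : Subgroup G)⁆ :=
      Subgroup.commutator_mem_commutator hc (Subgroup.mem_top x)
    have h2 : ⁅⁅c, x⁆, g⁆ ∈ (⊥ : Subgroup G) := by
      rw [← h]; exact Subgroup.commutator_mem_commutator h1 (Subgroup.mem_top g)
    exact commutatorElement_eq_one_iff_commute.mp (Subgroup.mem_bot.mp h2)
  have hmul : ∀ c ∈ derivedSeries G 2, ∀ x y : G, ⁅c, x * y⁆ = ⁅c, x⁆ * ⁅c, y⁆ := by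
    intro c hc x y
    have key : ⁅c, x * y⁆ = ⁅c, x⁆ * (x * ⁅c, y⁆ * x⁻¹) := by
      simp only [commutatorElement_def]; group
    rw [key, (hcent c hc y x).symm.eq]; group
  have hinv : ∀ c ∈ derivedSeries G 2, ∀ x : G, ⁅c, x⁻¹⁆ = ⁅c, x⁆⁻¹ := by
    intro c hc x
    have key : ⁅c, x⁻¹⁆ = x⁻¹ * ⁅c, x⁆⁻¹ * x := by
      simp only [commutatorElement_def]; group
    rw [key, mul_assoc, ((hcent c hc x x).inv_left).eq]; group
  -- ⁅c, w⁆ = 1 for c in G'' and w in G'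
  have hkill : ∀ c ∈ derivedSeries G 2, ∀ w ∈ derivedSeries G 1, ⁅c, w⁆ = 1 := by
    intro c hc w hw
    have hw' : w ∈ Subgroup.closure (commutatorSet G) := by
      rw [← commutator_eq_closure]
      simpa [commutator_def] using hw
    refine Subgroup.closure_induction ?_ (by simp) ?_ ?_ hw'
    · rintro x ⟨a, b, rfl⟩
      have : ⁅c, a * b * a⁻¹ * b⁻¹⁆ = ⁅c, a⁆ * ⁅c, b⁆ * ⁅c, a⁆⁻¹ * ⁅c, b⁆⁻¹ := by
        rw [hmul c hc, hmul c hc, hmul c hc, hinv c hc, hinv c hc]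
      rw [commutatorElement_def a b, this, (hcent c hc a ⁅c, b⁆).eq]
      group
    · intro x y _ _ hx hy
      rw [hmul c hc, hx, hy, one_mul]
    · intro x _ hx
      rw [hinv c hc, hx, inv_one]
  -- main argument
  have hc2 : ⁅u, v⁆ ∈ derivedSeries G 2 := by
    rw [derivedSeries_succ]
    exact Subgroup.commutator_mem_commutator hu hv
  have hcomm : Commute u ⁅u, v⁆ := by
    have := hkill ⁅u, v⁆ hc2 u hu
    exact (commutatorElement_eq_one_iff_commute.mp this).symm
  have key : ⁅u⁻¹, v⁆ = (u⁻¹ * ⁅u, v⁆ * u)⁻¹ := by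
    simp only [commutatorElement_def]; group
  rw [key, hcomm.inv_left.eq]; group
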